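/- In a minimum-length covering strategy for a tree, if an edge (x,y) is traversed by two different robots, then both robots traverse (x,y) in the same direction. -/

import Mathlib

open Finset

variable {V : Type*}

/-- The list of consecutive steps of a walk given as a list of vertices. -/
def wsteps (W : List V) : List (V × V) := W.zip W.tail

/-- A walk on a graph: a nonempty list of vertices in which consecutive
entries are equal or adjacent. -/
def IsWalk (G : SimpleGraph V) (W : List V) : Prop :=
  W ≠ [] ∧ ∀ p ∈ wsteps W, p.1 = p.2 ∨ G.Adj p.1 p.2

/-- The length of a walk: the number of position-changing moves. -/
def wlen [DecidableEq V] (W : List V) : ℕ :=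
  (wsteps W).countP (fun p => decide (p.1 ≠ p.2))

/-- The number of times a walk traverses the edge `{x, y}` (in either direction). -/
def trav [DecidableEq V] (W : List V) (x y : V) : ℕ :=
  (wsteps W).countP (fun p => decide ((p.1 = x ∧ p.2 = y) ∨ (p.1 = y ∧ p.2 = x)))

/-- The number of times a walk traverses the edge `(x, y)` from `x` to `y`. -/
def dirTrav [DecidableEq V] (W : List V) (x y : V) : ℕ :=
  (wsteps W).countP (fun p => decide (p.1 = x ∧ p.2 = y))

/-- A tuple of walks covers the graph: every vertex appears in some walk. -/
def Covers {k : ℕ} (S : Fin k → List V) : Prop := ∀ v : V, ∃ i, v ∈ S i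

/-- The total length of a strategy: the sum of the lengths of the walks. -/
def slen [DecidableEq V] {k : ℕ} (S : Fin k → List V) : ℕ := ∑ i, wlen (S i)

/-- A minimum-length covering strategy: a tuple of walks covering all vertices whose
total length is no larger than that of any covering strategy with the same starts. -/
def IsMinCover [DecidableEq V] (G : SimpleGraph V) {k : ℕ} (S : Fin k → List V) : Prop :=
  (∀ i, IsWalk G (S i)) ∧ Covers S ∧
    ∀ S' : Fin k → List V, (∀ i, IsWalk G (S' i)) → Covers S' →
      (∀ i, (S' i).head? = (S i).head?) → slen S ≤ slen S'


lemma wsteps_single (a : V) : wsteps [a] = [] := rfl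

lemma wsteps_cons_cons (a b : V) (l : List V) :
    wsteps (a :: b :: l) = (a, b) :: wsteps (b :: l) := rfl

lemma wsteps_append (P : List V) (a : V) (T : List V) :
    wsteps (P ++ a :: T) = wsteps (P ++ [a]) ++ wsteps (a :: T) := by
  induction P with
  | nil => simp [wsteps_single]
  | cons c P ih =>
    cases P with
    | nil => simp [wsteps_cons_cons, wsteps_single]
    | cons d P' =>
      simp only [List.cons_append, wsteps_cons_cons] at *
      rw [ih]

lemma exists_split_of_mem_wsteps {a b : V} :
    ∀ {W : List V}, (a, b) ∈ wsteps W → ∃ P Q, W = P ++ a :: b :: Q := by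
  intro W
  induction W with
  | nil => intro h; simp [wsteps] at h
  | cons c W ih =>
    cases W with
    | nil => intro h; simp [wsteps_single] at h
    | cons d W' =>
      intro h
      rw [wsteps_cons_cons] at h
      rcases List.mem_cons.1 h with h | h
      · refine ⟨[], W', ?_⟩
        simp only [Prod.mk.injEq] at h
        simp [h.1, h.2]
      · obtain ⟨P, Q, hPQ⟩ := ih h
        exact ⟨c :: P, Q, by rw [List.cons_append, ← hPQ]⟩

lemma isWalk_of_parts (G : SimpleGraph V) (P : List V) (a : V) (T : List V)
    (h1 : ∀ p ∈ wsteps (P ++ [a]), p.1 = p.2 ∨ G.Adj p.1 p.2)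
    (h2 : ∀ p ∈ wsteps (a :: T), p.1 = p.2 ∨ G.Adj p.1 p.2) :
    IsWalk G (P ++ a :: T) := by
  refine ⟨by simp, ?_⟩
  intro p hp
  rw [wsteps_append] at hp
  rcases List.mem_append.1 hp with h | h
  · exact h1 p h
  · exact h2 p h

lemma countP_wsteps_split2 (p : V × V → Bool) (P : List V) (a : V) (T : List V) :
    (wsteps (P ++ a :: T)).countP p
      = (wsteps (P ++ [a])).countP p + (wsteps (a :: T)).countP p := by
  rw [wsteps_append, List.countP_append]

lemma countP_wsteps_split3 (p : V × V → Bool) (P : List V) (a b : V) (Q : List V) :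
    (wsteps (P ++ a :: b :: Q)).countP p
      = (wsteps (P ++ [a])).countP p + ((if p (a, b) then 1 else 0)
          + (wsteps (b :: Q)).countP p) := by
  rw [wsteps_append, wsteps_cons_cons, List.countP_append, List.countP_cons]
  omega

lemma head?_append_cons (P : List V) (a : V) (L L' : List V) :
    (P ++ a :: L).head? = (P ++ a :: L').head? := by
  cases P <;> simp

/-- In a minimum-length covering strategy on a tree, no edge is traversed from x to y
by one robot and from y to x by another robot. -/
theorem stmt9 {V : Type*} [Fintype V] [DecidableEq V] (G : SimpleGraph V) (hT : G.IsTree)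
    {k : ℕ} (S : Fin k → List V) (hS : IsMinCover G S)
    (x y : V) (hxy : G.Adj x y) (i j : Fin k) (hij : i ≠ j)
    (hi : 1 ≤ dirTrav (S i) x y) :
    dirTrav (S j) y x = 0 := by
  by_contra hj
  have hj' : 1 ≤ dirTrav (S j) y x := Nat.pos_of_ne_zero hj
  have hxne : x ≠ y := G.ne_of_adj hxy
  obtain ⟨P, Q, hPQ⟩ : ∃ P Q, S i = P ++ x :: y :: Q := by
    obtain ⟨p, hp, hpp⟩ := List.countP_pos_iff.1 hi
    have hpe : p = (x, y) := by
      have := of_decide_eq_true hpp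
      exact Prod.ext this.1 this.2
    exact exists_split_of_mem_wsteps (hpe ▸ hp)
  obtain ⟨R, T, hRT⟩ : ∃ R T, S j = R ++ y :: x :: T := by
    obtain ⟨p, hp, hpp⟩ := List.countP_pos_iff.1 hj'
    have hpe : p = (y, x) := by
      have := of_decide_eq_true hpp
      exact Prod.ext this.1 this.2
    exact exists_split_of_mem_wsteps (hpe ▸ hp)
  -- step decompositions
  have hWi := (hS.1 i)
  have hWj := (hS.1 j)
  have hsi : wsteps (S i) = wsteps (P ++ [x]) ++ (x, y) :: wsteps (y :: Q) := by
    rw [hPQ, wsteps_append, wsteps_cons_cons]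
  have hsj : wsteps (S j) = wsteps (R ++ [y]) ++ (y, x) :: wsteps (x :: T) := by
    rw [hRT, wsteps_append, wsteps_cons_cons]
  have hstepsP : ∀ p ∈ wsteps (P ++ [x]), p.1 = p.2 ∨ G.Adj p.1 p.2 := by
    intro p hp
    exact hWi.2 p (by rw [hsi]; exact List.mem_append_left _ hp)
  have hstepsyQ : ∀ p ∈ wsteps (y :: Q), p.1 = p.2 ∨ G.Adj p.1 p.2 := by
    intro p hp
    exact hWi.2 p (by rw [hsi]; exact List.mem_append_right _ (List.mem_cons_of_mem _ hp))
  have hstepsR : ∀ p ∈ wsteps (R ++ [y]), p.1 = p.2 ∨ G.Adj p.1 p.2 := by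
    intro p hp
    exact hWj.2 p (by rw [hsj]; exact List.mem_append_left _ hp)
  have hstepsxT : ∀ p ∈ wsteps (x :: T), p.1 = p.2 ∨ G.Adj p.1 p.2 := by
    intro p hp
    exact hWj.2 p (by rw [hsj]; exact List.mem_append_right _ (List.mem_cons_of_mem _ hp))
  -- new strategy
  set Wi' : List V := P ++ x :: T with hWi'def
  set Wj' : List V := R ++ y :: Q with hWj'def
  set S' : Fin k → List V := Function.update (Function.update S i Wi') j Wj' with hS'def
  have hS'j : S' j = Wj' := by simp [hS'def]
  have hS'i : S' i = Wi' := by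
    simp [hS'def, Function.update_of_ne hij]
  have hS'other : ∀ l, l ≠ i → l ≠ j → S' l = S l := by
    intro l hli hlj
    simp [hS'def, Function.update_of_ne hlj, Function.update_of_ne hli]
  -- walks
  have hwalks : ∀ l, IsWalk G (S' l) := by
    intro l
    by_cases hlj : l = j
    · subst hlj; rw [hS'j]
      exact isWalk_of_parts G R y Q hstepsR hstepsyQ
    · by_cases hli : l = i
      · subst hli; rw [hS'i]
        exact isWalk_of_parts G P x T hstepsP hstepsxT
      · rw [hS'other l hli hlj]; exact hS.1 l
  -- covers
  have hcov : Covers S' := by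
    intro v
    obtain ⟨l, hl⟩ := hS.2.1 v
    by_cases hli : l = i
    · rw [hli, hPQ] at hl
      simp only [List.mem_append, List.mem_cons] at hl
      rcases hl with h | h | h | h
      · exact ⟨i, by rw [hS'i]; simp [hWi'def, h]⟩
      · exact ⟨i, by rw [hS'i]; simp [hWi'def, h]⟩
      · exact ⟨j, by rw [hS'j]; simp [hWj'def, h]⟩
      · exact ⟨j, by rw [hS'j]; simp [hWj'def, h]⟩
    · by_cases hlj : l = j
      · rw [hlj, hRT] at hl
        simp only [List.mem_append, List.mem_cons] at hl
        rcases hl with h | h | h | h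
        · exact ⟨j, by rw [hS'j]; simp [hWj'def, h]⟩
        · exact ⟨j, by rw [hS'j]; simp [hWj'def, h]⟩
        · exact ⟨i, by rw [hS'i]; simp [hWi'def, h]⟩
        · exact ⟨i, by rw [hS'i]; simp [hWi'def, h]⟩
      · exact ⟨l, by rw [hS'other l hli hlj]; exact hl⟩
  -- heads
  have hheads : ∀ l, (S' l).head? = (S l).head? := by
    intro l
    by_cases hlj : l = j
    · subst hlj; rw [hS'j, hRT]; exact head?_append_cons R y Q (x :: T)
    · by_cases hli : l = i
      · subst hli; rw [hS'i, hPQ]; exact head?_append_cons P x T (y :: Q)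
      · rw [hS'other l hli hlj]
  -- lengths
  have hlen_i : wlen (S i) = wlen (P ++ [x]) + (1 + wlen (y :: Q)) := by
    rw [hPQ]
    unfold wlen
    rw [countP_wsteps_split3]
    simp [hxne]
  have hlen_j : wlen (S j) = wlen (R ++ [y]) + (1 + wlen (x :: T)) := by
    rw [hRT]
    unfold wlen
    rw [countP_wsteps_split3]
    simp [Ne.symm hxne]
  have hlen_i' : wlen Wi' = wlen (P ++ [x]) + wlen (x :: T) := by
    unfold wlen
    exact countP_wsteps_split2 _ P x T
  have hlen_j' : wlen Wj' = wlen (R ++ [y]) + wlen (y :: Q) := by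
    unfold wlen
    exact countP_wsteps_split2 _ R y Q
  -- total length comparison
  have hji : j ∈ (Finset.univ : Finset (Fin k)).erase i :=
    Finset.mem_erase.2 ⟨Ne.symm hij, Finset.mem_univ j⟩
  have hsum : ∀ f : Fin k → ℕ,
      ∑ l, f l = f i + (f j + ∑ l ∈ ((Finset.univ : Finset (Fin k)).erase i).erase j, f l) := by
    intro f
    rw [Finset.add_sum_erase _ f hji, Finset.add_sum_erase _ f (Finset.mem_univ i)]
  have hrest : ∑ l ∈ ((Finset.univ : Finset (Fin k)).erase i).erase j, wlen (S' l)
      = ∑ l ∈ ((Finset.univ : Finset (Fin k)).erase i).erase j, wlen (S l) := by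
    refine Finset.sum_congr rfl ?_
    intro l hl
    rw [hS'other l (Finset.mem_erase.1 (Finset.mem_erase.1 hl).2).1 (Finset.mem_erase.1 hl).1]
  have hslen : slen S' + 2 = slen S := by
    unfold slen
    rw [hsum (fun l => wlen (S' l)), hsum (fun l => wlen (S l))]
    simp only [hS'i, hS'j, hrest]
    omega
  have := hS.2.2 S' hwalks hcov hheads
  omega
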